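/- The number of lattice points needed: in an ideal almost Pogorelov polytope, the minimal number of faces is 14, attained by the 3-dimensional permutohedron; in particular m ≥ 14 and m is even for every ideal almost Pogorelov polytope. -/

import Mathlib

/-- A combinatorial model of a simple 3-dimensional convex polytope:
finite sets of vertices, edges and faces (facets) with incidence relations,
every vertex lying on exactly 3 edges and 3 faces, every edge on exactly
2 vertices and 2 faces, every face having at least 3 edges, together with
the Euler relation `f₀ - f₁ + f₂ = 2` and the standard local properties of
the face poset of a simple 3-polytope. -/
structure SimplePolytope3 where
  V : Type
  E : Type
  F : Type
  fintV : Fintype V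
  fintE : Fintype E
  fintF : Fintype F
  decV : DecidableEq V
  decE : DecidableEq E
  decF : DecidableEq F
  vIncE : V → E → Prop
  eIncF : E → F → Prop
  vIncF : V → F → Prop
  vIncF_iff : ∀ v f, vIncF v f ↔ ∃ e, vIncE v e ∧ eIncF e f
  euler : (Nat.card V : ℤ) - Nat.card E + Nat.card F = 2
  vertex_faces : ∀ v : V, Set.ncard {f | vIncF v f} = 3
  vertex_edges : ∀ v : V, Set.ncard {e | vIncE v e} = 3
  edge_faces : ∀ e : E, Set.ncard {f | eIncF e f} = 2
  edge_vertices : ∀ e : E, Set.ncard {v | vIncE v e} = 2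
  face_deg_ge : ∀ f : F, 3 ≤ Set.ncard {e | eIncF e f}
  faces_card_ge : 4 ≤ Nat.card F
  faces_meet_one_edge : ∀ f g : F, f ≠ g → ∀ e e' : E,
    eIncF e f → eIncF e g → eIncF e' f → eIncF e' g → e = e'
  vertex_share_edge : ∀ f g : F, f ≠ g → ∀ v : V, vIncF v f → vIncF v g →
    ∃ e, eIncF e f ∧ eIncF e g

attribute [instance] SimplePolytope3.fintV SimplePolytope3.fintE SimplePolytope3.fintF
  SimplePolytope3.decV SimplePolytope3.decE SimplePolytope3.decF

namespace SimplePolytope3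

variable (P : SimplePolytope3)

/-- Two facets are adjacent if they are distinct and share an edge. -/
def Adj (f g : P.F) : Prop := f ≠ g ∧ ∃ e, P.eIncF e f ∧ P.eIncF e g

/-- Two facets are disjoint if they are distinct and share no point
(equivalently, no vertex, since facets meeting in a relative interior point of
an edge share the whole edge and hence its vertices). -/
def FDisjoint (f g : P.F) : Prop := f ≠ g ∧ ∀ v, ¬ (P.vIncF v f ∧ P.vIncF v g)

/-- The number of edges of a facet. -/
noncomputable def faceDeg (f : P.F) : ℕ := Set.ncard {e | P.eIncF e f}

/-- A facet is a quadrangle if it has exactly 4 edges. -/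
def IsQuad (f : P.F) : Prop := P.faceDeg f = 4

/-- A `k`-belt: a cyclic sequence of `k` pairwise distinct facets such that
facets are adjacent if and only if they follow each other, and no three
facets of it have a common vertex. -/
def IsBelt {k : ℕ} (b : ZMod k → P.F) : Prop :=
  3 ≤ k ∧ Function.Injective b ∧
  (∀ i j : ZMod k, P.Adj (b i) (b j) ↔ (j = i + 1 ∨ i = j + 1)) ∧
  (∀ v : P.V, ¬ ∃ i j l : ZMod k, i ≠ j ∧ j ≠ l ∧ i ≠ l ∧
    P.vIncF v (b i) ∧ P.vIncF v (b j) ∧ P.vIncF v (b l))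

/-- A belt surrounds a facet `f` if `f` is not in the belt and the facets of
the belt are exactly the facets adjacent to `f`. -/
def Surrounds {k : ℕ} (b : ZMod k → P.F) (f : P.F) : Prop :=
  f ∉ Set.range b ∧ ∀ g, P.Adj g f ↔ g ∈ Set.range b

/-- A simple 3-polytope is flag iff it is not the simplex and has no 3-belt. -/
def Flag : Prop :=
  Nat.card P.F ≠ 4 ∧ ¬ ∃ b : ZMod 3 → P.F, P.IsBelt b

/-- An almost Pogorelov polytope: a flag simple 3-polytope all of whose
4-belts are trivial (each surrounds a facet). -/
def AlmostPogorelov : Prop :=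
  P.Flag ∧ ∀ b : ZMod 4 → P.F, P.IsBelt b → ∃ f, P.Surrounds b f

/-- An ideal almost Pogorelov polytope: an almost Pogorelov polytope each of
whose vertices lies on exactly one quadrangular facet. -/
def IdealAPog : Prop :=
  P.AlmostPogorelov ∧ ∀ v : P.V, ∃! f : P.F, P.vIncF v f ∧ P.IsQuad f

/-- A Pogorelov polytope: not the simplex, with no 3-belts and no 4-belts. -/
def Pogorelov : Prop :=
  P.Flag ∧ ¬ ∃ b : ZMod 4 → P.F, P.IsBelt b

/-- A 3-belt given as a 3-element set of facets: pairwise adjacent facets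
with no common vertex. -/
def Is3Belt (ω : Finset P.F) : Prop :=
  ω.card = 3 ∧ (∀ f ∈ ω, ∀ g ∈ ω, f ≠ g → P.Adj f g) ∧
    ¬ ∃ v : P.V, ∀ f ∈ ω, P.vIncF v f

/-- The graph on a set `ω` of facets where two facets are joined iff they
share a point of `∂P`; its connected components are the connected components
of `P_ω = ⋃_{i ∈ ω} F_i`. -/
def touchGraph (ω : Finset P.F) : SimpleGraph {f : P.F // f ∈ ω} where
  Adj a b := a ≠ b ∧ ∃ v, P.vIncF v a.1 ∧ P.vIncF v b.1
  symm := by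
    constructor
    intro a b hab
    exact ⟨hab.1.symm, hab.2.imp fun v hv => ⟨hv.2, hv.1⟩⟩
  loopless := by constructor; intro a h; exact h.1 rfl

/-- The number of connected components of `P_ω`. -/
noncomputable def comps (ω : Finset P.F) : ℕ := Nat.card (P.touchGraph ω).ConnectedComponent

/-- The Euler characteristic of the 2-complex `P_ω`. -/
noncomputable def chi (ω : Finset P.F) : ℤ :=
  (Set.ncard {v : P.V | ∃ f ∈ ω, P.vIncF v f} : ℤ)
    - (Set.ncard {e : P.E | ∃ f ∈ ω, P.eIncF e f} : ℤ) + (ω.card : ℤ)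

/-- The rank of `H̃¹(P_ω)`, computed as (#components) − χ(P_ω), since each
component of `P_ω` is a sphere with holes. -/
noncomputable def rkH1 (ω : Finset P.F) : ℤ := (P.comps ω : ℤ) - P.chi ω

end SimplePolytope3


open Finset in
private lemma ncard_univ_filter {α : Type} [Fintype α] (p : α → Prop) [DecidablePred p] :
    Set.ncard {x | p x} = (Finset.univ.filter p).card := by
  rw [← Set.ncard_coe_finset]; congr 1; ext x; simp

private lemma double_count {α β : Type} [Fintype α] [Fintype β] (s : Finset α)
    (R : α → β → Prop) [∀ a b, Decidable (R a b)] :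
    ∑ a ∈ s, (Finset.univ.filter (fun b => R a b)).card
      = ∑ b : β, (s.filter (fun a => R a b)).card := by
  simp only [Finset.card_filter]; exact Finset.sum_comm


namespace SimplePolytope3Aux

private def eVd : Nat → Nat × Nat := fun x => match x with
  | 0 => (0, 1)
  | 1 => (0, 2)
  | 2 => (0, 6)
  | 3 => (1, 4)
  | 4 => (1, 7)
  | 5 => (2, 3)
  | 6 => (2, 12)
  | 7 => (3, 5)
  | 8 => (3, 13)
  | 9 => (4, 5)
  | 10 => (4, 18)
  | 11 => (5, 19)
  | 12 => (6, 7)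
  | 13 => (6, 8)
  | 14 => (7, 10)
  | 15 => (8, 9)
  | 16 => (8, 14)
  | 17 => (9, 11)
  | 18 => (9, 15)
  | 19 => (10, 11)
  | 20 => (10, 20)
  | 21 => (11, 21)
  | 22 => (12, 13)
  | 23 => (12, 14)
  | 24 => (13, 16)
  | 25 => (14, 15)
  | 26 => (15, 17)
  | 27 => (16, 17)
  | 28 => (16, 22)
  | 29 => (17, 23)
  | 30 => (18, 19)
  | 31 => (18, 20)
  | 32 => (19, 22)
  | 33 => (20, 21)
  | 34 => (21, 23)
  | 35 => (22, 23)
  | _ => (0, 0)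
private def eFd : Nat → Nat × Nat := fun x => match x with
  | 0 => (0, 4)
  | 1 => (0, 10)
  | 2 => (4, 10)
  | 3 => (0, 11)
  | 4 => (4, 11)
  | 5 => (0, 5)
  | 6 => (5, 10)
  | 7 => (0, 12)
  | 8 => (5, 12)
  | 9 => (0, 6)
  | 10 => (6, 11)
  | 11 => (6, 12)
  | 12 => (1, 4)
  | 13 => (1, 10)
  | 14 => (1, 11)
  | 15 => (1, 7)
  | 16 => (7, 10)
  | 17 => (1, 13)
  | 18 => (7, 13)
  | 19 => (1, 8)
  | 20 => (8, 11)
  | 21 => (8, 13)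
  | 22 => (2, 5)
  | 23 => (2, 10)
  | 24 => (2, 12)
  | 25 => (2, 7)
  | 26 => (2, 13)
  | 27 => (2, 9)
  | 28 => (9, 12)
  | 29 => (9, 13)
  | 30 => (3, 6)
  | 31 => (3, 11)
  | 32 => (3, 12)
  | 33 => (3, 8)
  | 34 => (3, 13)
  | 35 => (3, 9)
  | _ => (0, 0)
private def vFd : Nat → Nat × Nat × Nat := fun x => match x with
  | 0 => (0, 4, 10)
  | 1 => (0, 4, 11)
  | 2 => (0, 5, 10)
  | 3 => (0, 5, 12)
  | 4 => (0, 6, 11)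
  | 5 => (0, 6, 12)
  | 6 => (1, 4, 10)
  | 7 => (1, 4, 11)
  | 8 => (1, 7, 10)
  | 9 => (1, 7, 13)
  | 10 => (1, 8, 11)
  | 11 => (1, 8, 13)
  | 12 => (2, 5, 10)
  | 13 => (2, 5, 12)
  | 14 => (2, 7, 10)
  | 15 => (2, 7, 13)
  | 16 => (2, 9, 12)
  | 17 => (2, 9, 13)
  | 18 => (3, 6, 11)
  | 19 => (3, 6, 12)
  | 20 => (3, 8, 11)
  | 21 => (3, 8, 13)
  | 22 => (3, 9, 12)
  | 23 => (3, 9, 13)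
  | _ => (0, 0, 0)
private def nbrs : Nat → List Nat := fun x => match x with
  | 0 => [4, 5, 6, 10, 11, 12]
  | 1 => [4, 7, 8, 10, 11, 13]
  | 2 => [5, 7, 9, 10, 12, 13]
  | 3 => [6, 8, 9, 11, 12, 13]
  | 4 => [0, 1, 10, 11]
  | 5 => [0, 2, 10, 12]
  | 6 => [0, 3, 11, 12]
  | 7 => [1, 2, 10, 13]
  | 8 => [1, 3, 11, 13]
  | 9 => [2, 3, 12, 13]
  | 10 => [0, 1, 2, 4, 5, 7]
  | 11 => [0, 1, 3, 4, 6, 8]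
  | 12 => [0, 2, 3, 5, 6, 9]
  | 13 => [1, 2, 3, 7, 8, 9]
  | _ => []

@[reducible] private def pvE (v : Fin 24) (e : Fin 36) : Prop :=
  (eVd e.val).1 = v.val ∨ (eVd e.val).2 = v.val
@[reducible] private def peF (e : Fin 36) (f : Fin 14) : Prop :=
  (eFd e.val).1 = f.val ∨ (eFd e.val).2 = f.val
@[reducible] private def pvF (v : Fin 24) (f : Fin 14) : Prop :=
  (vFd v.val).1 = f.val ∨ (vFd v.val).2.1 = f.val ∨ (vFd v.val).2.2 = f.val

set_option maxHeartbeats 8000000 in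
private def Perm : SimplePolytope3 where
  V := Fin 24
  E := Fin 36
  F := Fin 14
  fintV := inferInstance
  fintE := inferInstance
  fintF := inferInstance
  decV := inferInstance
  decE := inferInstance
  decF := inferInstance
  vIncE := pvE
  eIncF := peF
  vIncF := pvF
  vIncF_iff := by decide
  euler := by norm_num [Nat.card_eq_fintype_card]
  vertex_faces := by
    intro v
    rw [ncard_univ_filter]
    revert v; decide
  vertex_edges := by
    intro v
    rw [ncard_univ_filter]
    revert v; decide
  edge_faces := by
    intro e
    rw [ncard_univ_filter]
    revert e; decide
  edge_vertices := by
    intro e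
    rw [ncard_univ_filter]
    revert e; decide
  face_deg_ge := by
    intro f
    rw [ncard_univ_filter]
    revert f; decide
  faces_card_ge := by norm_num [Nat.card_eq_fintype_card]
  faces_meet_one_edge := by
    have hord : ∀ x : Fin 36, (eFd x.val).1 < (eFd x.val).2 := by decide
    have hinj : ∀ x y : Fin 36, eFd x.val = eFd y.val → x = y := by decide
    intro f g hfg e e' hef heg he'f he'g
    have hv : f.val ≠ g.val := fun hc => hfg (Fin.val_injective hc)
    have ha := hord e
    have hb := hord e'
    apply hinj
    rcases hef with h1 | h1 <;> rcases heg with h2 | h2 <;>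
      rcases he'f with h3 | h3 <;> rcases he'g with h4 | h4 <;>
      exact Prod.ext_iff.mpr ⟨by omega, by omega⟩
  vertex_share_edge := by
    have key : ∀ v : Fin 24, ∀ f g : Fin 14, pvF v f → pvF v g → f ≠ g →
        ∃ e : Fin 36, peF e f ∧ peF e g := by decide
    intro f g hfg v hvf hvg
    exact key v f g hvf hvg hfg

@[reducible] private def adjB (f g : Fin 14) : Prop := g.val ∈ nbrs f.val

private lemma hAdj' : ∀ f g : Fin 14,
    ((f ≠ g) ∧ ∃ e : Fin 36, peF e f ∧ peF e g) ↔ adjB f g := by decide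

private lemma zmod3cases : ∀ y : ZMod 3, y = 0 ∨ y = 1 ∨ y = 2 := by decide

private lemma zmod4cases : ∀ y : ZMod 4, y = 0 ∨ y = 1 ∨ y = 2 ∨ y = 3 := by decide

private lemma tri : ∀ a c d : Fin 14, adjB a c → adjB c d → adjB a d →
    ∃ v : Fin 24, pvF v a ∧ pvF v c ∧ pvF v d := by decide

set_option maxHeartbeats 8000000 in
set_option synthInstance.maxHeartbeats 2000000 in
set_option synthInstance.maxSize 2000 in
set_option maxRecDepth 10000 in
private lemma big4 : ∀ f0 f1 f2 f3 : Fin 14, adjB f0 f1 → adjB f1 f2 → adjB f2 f3 →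
    adjB f3 f0 → ¬ adjB f0 f2 → ¬ adjB f1 f3 →
    f0 ≠ f1 → f0 ≠ f2 → f0 ≠ f3 → f1 ≠ f2 → f1 ≠ f3 → f2 ≠ f3 →
    ∃ g : Fin 14, (g ≠ f0 ∧ g ≠ f1 ∧ g ≠ f2 ∧ g ≠ f3) ∧
      ∀ h : Fin 14, adjB h g ↔ (h = f0 ∨ h = f1 ∨ h = f2 ∨ h = f3) := by decide

private lemma uq : ∀ v : Fin 24, ∃ f : Fin 14, (pvF v f ∧ (4 ≤ f.val ∧ f.val ≤ 9)) ∧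
    ∀ g : Fin 14, (pvF v g ∧ (4 ≤ g.val ∧ g.val ≤ 9)) → g = f := by
  decide

private lemma hdeg4 : ∀ f : Fin 14,
    ((Finset.univ.filter (fun e : Fin 36 => peF e f)).card = 4 ↔ (4 ≤ f.val ∧ f.val ≤ 9)) := by
  decide

private lemma hquadIff : ∀ f : Fin 14, Perm.IsQuad f ↔ (4 ≤ f.val ∧ f.val ≤ 9) := by
  intro f
  have hfd : Perm.faceDeg f = (Finset.univ.filter (fun e : Fin 36 => peF e f)).card :=
    ncard_univ_filter (fun e : Fin 36 => peF e f)
  show Perm.faceDeg f = 4 ↔ _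
  rw [hfd]
  exact hdeg4 f

private lemma permFlag : Perm.Flag := by
  constructor
  · rw [Nat.card_eq_fintype_card]
    decide
  · rintro ⟨b, hb⟩
    obtain ⟨-, hinj, hadj, hvert⟩ := hb
    have h01 : adjB (b 0) (b 1) :=
      (hAdj' _ _).mp ((hadj 0 1).mpr (Or.inl (by decide)))
    have h12 : adjB (b 1) (b 2) :=
      (hAdj' _ _).mp ((hadj 1 2).mpr (Or.inl (by decide)))
    have h02 : adjB (b 0) (b 2) :=
      (hAdj' _ _).mp ((hadj 0 2).mpr (Or.inr (by decide)))
    obtain ⟨v, hv1, hv2, hv3⟩ := tri (b 0) (b 1) (b 2) h01 h12 h02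
    exact hvert v ⟨0, 1, 2, by decide, by decide, by decide, hv1, hv2, hv3⟩

private lemma perm4belts : ∀ b : ZMod 4 → Perm.F, Perm.IsBelt b →
    ∃ f, Perm.Surrounds b f := by
  intro b hb
  obtain ⟨-, hinj, hadj, -⟩ := hb
  have h01 : adjB (b 0) (b 1) := (hAdj' _ _).mp ((hadj 0 1).mpr (Or.inl (by decide)))
  have h12 : adjB (b 1) (b 2) := (hAdj' _ _).mp ((hadj 1 2).mpr (Or.inl (by decide)))
  have h23 : adjB (b 2) (b 3) := (hAdj' _ _).mp ((hadj 2 3).mpr (Or.inl (by decide)))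
  have h30 : adjB (b 3) (b 0) := (hAdj' _ _).mp ((hadj 3 0).mpr (Or.inl (by decide)))
  have hn02 : ¬ adjB (b 0) (b 2) := fun hc =>
    absurd ((hadj 0 2).mp ((hAdj' _ _).mpr hc)) (by decide)
  have hn13 : ¬ adjB (b 1) (b 3) := fun hc =>
    absurd ((hadj 1 3).mp ((hAdj' _ _).mpr hc)) (by decide)
  obtain ⟨g, ⟨hg0, hg1, hg2, hg3⟩, hgiff⟩ := big4 (b 0) (b 1) (b 2) (b 3) h01 h12 h23 h30
    hn02 hn13 (hinj.ne (by decide)) (hinj.ne (by decide)) (hinj.ne (by decide))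
    (hinj.ne (by decide)) (hinj.ne (by decide)) (hinj.ne (by decide))
  refine ⟨g, ?_, ?_⟩
  · rintro ⟨y, hy⟩
    rcases zmod4cases y with rfl | rfl | rfl | rfl
    exacts [hg0 hy.symm, hg1 hy.symm, hg2 hy.symm, hg3 hy.symm]
  · intro g'
    constructor
    · intro hadj'
      rcases (hgiff g').mp ((hAdj' g' g).mp hadj') with h | h | h | h
      exacts [⟨0, h.symm⟩, ⟨1, h.symm⟩, ⟨2, h.symm⟩, ⟨3, h.symm⟩]
    · rintro ⟨y, rfl⟩
      apply (hAdj' _ _).mpr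
      apply (hgiff _).mpr
      rcases zmod4cases y with rfl | rfl | rfl | rfl
      exacts [Or.inl rfl, Or.inr (Or.inl rfl), Or.inr (Or.inr (Or.inl rfl)),
        Or.inr (Or.inr (Or.inr rfl))]

private lemma permIdeal : Perm.IdealAPog := by
  refine ⟨⟨permFlag, perm4belts⟩, ?_⟩
  intro v
  obtain ⟨f, hf, hu⟩ := uq v
  exact ⟨f, ⟨hf.1, (hquadIff f).mpr hf.2⟩, fun g hg => hu g ⟨hg.1, (hquadIff g).mp hg.2⟩⟩

end SimplePolytope3Aux

open scoped Classical

namespace SimplePolytope3Aux2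
open SimplePolytope3Aux


private lemma local_two (P : SimplePolytope3) {v : P.V} {f : P.F} (h : P.vIncF v f) :
    (Finset.univ.filter (fun e => P.vIncE v e ∧ P.eIncF e f)).card = 2 := by
  classical
  have hEv : (Finset.univ.filter (fun e => P.vIncE v e)).card = 3 := by
    have := P.vertex_edges v; rwa [ncard_univ_filter] at this
  have hFv : (Finset.univ.filter (fun g => P.vIncF v g)).card = 3 := by
    have := P.vertex_faces v; rwa [ncard_univ_filter] at this
  have hk_pos : ∀ g, P.vIncF v g →
      1 ≤ ((Finset.univ.filter (fun e => P.vIncE v e)).filter (fun e => P.eIncF e g)).card := by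
    intro g hg
    obtain ⟨e, he1, he2⟩ := (P.vIncF_iff v g).mp hg
    exact Finset.card_pos.mpr ⟨e, by simp [he1, he2]⟩
  have hk_le : ∀ g, P.vIncF v g →
      ((Finset.univ.filter (fun e => P.vIncE v e)).filter (fun e => P.eIncF e g)).card ≤ 2 := by
    intro g hg
    by_contra hlt
    push_neg at hlt
    have hsub : (Finset.univ.filter (fun e => P.vIncE v e)).filter (fun e => P.eIncF e g)
        ⊆ Finset.univ.filter (fun e => P.vIncE v e) := Finset.filter_subset _ _
    have hle3 := Finset.card_le_card hsub
    have heq : (Finset.univ.filter (fun e => P.vIncE v e)).filter (fun e => P.eIncF e g)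
        = Finset.univ.filter (fun e => P.vIncE v e) :=
      Finset.eq_of_subset_of_card_le hsub (by omega)
    have hall : ∀ e, P.vIncE v e → P.eIncF e g := by
      intro e he
      have : e ∈ (Finset.univ.filter (fun e => P.vIncE v e)).filter (fun e => P.eIncF e g) := by
        rw [heq]; simp [he]
      exact (Finset.mem_filter.mp this).2
    obtain ⟨e1, e2, e3, h12, h13, h23, hEvset⟩ := Finset.card_eq_three.mp hEv
    have hvinc : ∀ e, e ∈ Finset.univ.filter (fun e => P.vIncE v e) → P.vIncE v e := by
      intro e he; exact (Finset.mem_filter.mp he).2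
    have he1m : P.vIncE v e1 := hvinc e1 (by rw [hEvset]; simp)
    have he2m : P.vIncE v e2 := hvinc e2 (by rw [hEvset]; simp)
    have he3m : P.vIncE v e3 := hvinc e3 (by rw [hEvset]; simp)
    have hother : ∀ e, P.vIncE v e → ∃ g', g' ≠ g ∧ P.eIncF e g' ∧
        g' ∈ (Finset.univ.filter (fun g' => P.vIncF v g')).erase g := by
      intro e he
      have hef : (Finset.univ.filter (fun g' => P.eIncF e g')).card = 2 := by
        have := P.edge_faces e; rwa [ncard_univ_filter] at this
      obtain ⟨g', hg'mem, hg'ne⟩ :=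
        Finset.exists_mem_ne (by rw [hef]; norm_num) g
      have hg'inc : P.eIncF e g' := (Finset.mem_filter.mp hg'mem).2
      have : P.vIncF v g' := (P.vIncF_iff v g').mpr ⟨e, he, hg'inc⟩
      exact ⟨g', hg'ne, hg'inc, Finset.mem_erase.mpr ⟨hg'ne, by simp [this]⟩⟩
    obtain ⟨g1, hg1ne, hg1inc, hg1m⟩ := hother e1 he1m
    obtain ⟨g2, hg2ne, hg2inc, hg2m⟩ := hother e2 he2m
    obtain ⟨g3, hg3ne, hg3inc, hg3m⟩ := hother e3 he3m
    have herase : ((Finset.univ.filter (fun g' => P.vIncF v g')).erase g).card = 2 := by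
      rw [Finset.card_erase_of_mem (by simp [hg]), hFv]
    have hmeet : ∀ (ga : P.F) (ea eb : P.E), ga ≠ g → ea ≠ eb →
        P.eIncF ea ga → P.eIncF eb ga → P.vIncE v ea → P.vIncE v eb → False := by
      intro ga ea eb hne hene hea heb heam hebm
      exact hene (P.faces_meet_one_edge ga g hne ea eb hea (hall ea heam) heb (hall eb hebm))
    by_cases h12' : g1 = g2
    · exact hmeet g1 e1 e2 hg1ne h12 hg1inc (h12' ▸ hg2inc) he1m he2m
    by_cases h13' : g1 = g3
    · exact hmeet g1 e1 e3 hg1ne h13 hg1inc (h13' ▸ hg3inc) he1m he3m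
    by_cases h23' : g2 = g3
    · exact hmeet g2 e2 e3 hg2ne h23 hg2inc (h23' ▸ hg3inc) he2m he3m
    · have hsub3 : ({g1, g2, g3} : Finset P.F)
          ⊆ (Finset.univ.filter (fun g' => P.vIncF v g')).erase g := by
        intro x hx
        simp only [Finset.mem_insert, Finset.mem_singleton] at hx
        rcases hx with rfl | rfl | rfl
        exacts [hg1m, hg2m, hg3m]
      have hc3 : ({g1, g2, g3} : Finset P.F).card = 3 := by
        rw [Finset.card_insert_of_notMem (by simp [h12', h13']),
          Finset.card_insert_of_notMem (by simp [h23']), Finset.card_singleton]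
      have := Finset.card_le_card hsub3
      omega
  have hsum_all : ∑ g : P.F,
      ((Finset.univ.filter (fun e => P.vIncE v e)).filter (fun e => P.eIncF e g)).card = 6 := by
    have hd := double_count (Finset.univ.filter (fun e => P.vIncE v e)) (fun e g => P.eIncF e g)
    have hlhs : ∑ e ∈ Finset.univ.filter (fun e => P.vIncE v e),
        (Finset.univ.filter (fun g => P.eIncF e g)).card = 6 := by
      have hconst : ∀ e ∈ Finset.univ.filter (fun e => P.vIncE v e),
          (Finset.univ.filter (fun g => P.eIncF e g)).card = 2 := by
        intro e _
        have := P.edge_faces e; rwa [ncard_univ_filter] at this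
      rw [Finset.sum_congr rfl hconst, Finset.sum_const, hEv, smul_eq_mul]
    rw [hlhs] at hd
    exact hd.symm
  have hsum : ∑ g ∈ Finset.univ.filter (fun g => P.vIncF v g),
      ((Finset.univ.filter (fun e => P.vIncE v e)).filter (fun e => P.eIncF e g)).card = 6 := by
    rw [← hsum_all]
    apply Finset.sum_subset (Finset.subset_univ _)
    intro g _ hgnot
    by_contra hkg
    obtain ⟨e, he⟩ := Finset.card_pos.mp (Nat.pos_of_ne_zero hkg)
    rw [Finset.mem_filter, Finset.mem_filter] at he
    have : P.vIncF v g := (P.vIncF_iff v g).mpr ⟨e, he.1.2, he.2⟩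
    simp [this] at hgnot
  have hf_mem : f ∈ Finset.univ.filter (fun g => P.vIncF v g) := by simp [h]
  have hkf : ((Finset.univ.filter (fun e => P.vIncE v e)).filter (fun e => P.eIncF e f)).card
      = 2 := by
    by_contra hne
    have hlt := lt_of_le_of_ne (hk_le f h) hne
    have hstrict : ∑ g ∈ Finset.univ.filter (fun g => P.vIncF v g),
        ((Finset.univ.filter (fun e => P.vIncE v e)).filter (fun e => P.eIncF e g)).card
        < ∑ g ∈ Finset.univ.filter (fun g => P.vIncF v g), 2 :=
      Finset.sum_lt_sum (fun g hg => hk_le g (by simpa using (Finset.mem_filter.mp hg).2))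
        ⟨f, hf_mem, hlt⟩
    rw [hsum, Finset.sum_const, hFv, smul_eq_mul] at hstrict
    omega
  rw [Finset.filter_filter] at hkf
  exact hkf

private lemma shared_edge (P : SimplePolytope3) {f g : P.F} {v : P.V}
    (hf : P.vIncF v f) (hg : P.vIncF v g) :
    ∃ e, P.vIncE v e ∧ P.eIncF e f ∧ P.eIncF e g := by
  classical
  have hAc := local_two P hf
  have hBc := local_two P hg
  have hsubE : (Finset.univ.filter (fun e => P.vIncE v e ∧ P.eIncF e f))
      ∪ (Finset.univ.filter (fun e => P.vIncE v e ∧ P.eIncF e g))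
      ⊆ Finset.univ.filter (fun e => P.vIncE v e) := by
    intro e he
    rcases Finset.mem_union.mp he with h' | h' <;>
      [exact Finset.mem_filter.mpr ⟨Finset.mem_univ _, (Finset.mem_filter.mp h').2.1⟩;
       exact Finset.mem_filter.mpr ⟨Finset.mem_univ _, (Finset.mem_filter.mp h').2.1⟩]
  have hEv : (Finset.univ.filter (fun e => P.vIncE v e)).card = 3 := by
    have := P.vertex_edges v; rwa [ncard_univ_filter] at this
  have hUle := Finset.card_le_card hsubE
  have hkey := Finset.card_union_add_card_inter
    (Finset.univ.filter (fun e => P.vIncE v e ∧ P.eIncF e f))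
    (Finset.univ.filter (fun e => P.vIncE v e ∧ P.eIncF e g))
  obtain ⟨e, he⟩ := Finset.card_pos.mp (by omega :
    0 < ((Finset.univ.filter (fun e => P.vIncE v e ∧ P.eIncF e f))
      ∩ (Finset.univ.filter (fun e => P.vIncE v e ∧ P.eIncF e g))).card)
  rw [Finset.mem_inter, Finset.mem_filter, Finset.mem_filter] at he
  exact ⟨e, he.1.2.1, he.1.2.2, he.2.2.2⟩

private lemma cardV_eq_deg (P : SimplePolytope3) (f : P.F) :
    (Finset.univ.filter (fun v => P.vIncF v f)).card
      = (Finset.univ.filter (fun e => P.eIncF e f)).card := by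
  classical
  have hd := double_count (Finset.univ.filter (fun v => P.vIncF v f))
    (fun v e => P.vIncE v e ∧ P.eIncF e f)
  have hlhs : ∑ v ∈ Finset.univ.filter (fun v => P.vIncF v f),
      (Finset.univ.filter (fun e => P.vIncE v e ∧ P.eIncF e f)).card
      = 2 * (Finset.univ.filter (fun v => P.vIncF v f)).card := by
    have hconst : ∀ v ∈ Finset.univ.filter (fun v => P.vIncF v f),
        (Finset.univ.filter (fun e => P.vIncE v e ∧ P.eIncF e f)).card = 2 := by
      intro v hv
      exact local_two P (by simpa using (Finset.mem_filter.mp hv).2)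
    rw [Finset.sum_congr rfl hconst, Finset.sum_const, smul_eq_mul, Nat.mul_comm]
  have hrhs : ∀ e : P.E,
      ((Finset.univ.filter (fun v => P.vIncF v f)).filter
        (fun v => P.vIncE v e ∧ P.eIncF e f)).card
      = if P.eIncF e f then 2 else 0 := by
    intro e
    by_cases he : P.eIncF e f
    · rw [if_pos he]
      have : (Finset.univ.filter (fun v => P.vIncF v f)).filter
          (fun v => P.vIncE v e ∧ P.eIncF e f)
          = Finset.univ.filter (fun v => P.vIncE v e) := by
        ext w
        simp only [Finset.mem_filter, Finset.mem_univ, true_and]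
        constructor
        · rintro ⟨-, hw, -⟩; exact hw
        · intro hw
          exact ⟨(P.vIncF_iff w f).mpr ⟨e, hw, he⟩, hw, he⟩
      rw [this]
      have := P.edge_vertices e; rwa [ncard_univ_filter] at this
    · rw [if_neg he]
      rw [Finset.card_eq_zero, Finset.filter_eq_empty_iff]
      intro v _
      exact fun hc => he hc.2
  rw [hlhs, Finset.sum_congr rfl (fun e _ => hrhs e), Finset.sum_ite, Finset.sum_const_zero,
    add_zero, Finset.sum_const, smul_eq_mul] at hd
  omega

private lemma nonquad_even (P : SimplePolytope3) (hP : P.IdealAPog) {f : P.F}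
    (hf : ¬ P.IsQuad f) :
    Even (Finset.univ.filter (fun v => P.vIncF v f)).card := by
  classical
  by_cases hne : (Finset.univ.filter (fun v => P.vIncF v f)).Nonempty
  swap
  · rw [Finset.not_nonempty_iff_eq_empty] at hne
    rw [hne]; simp
  choose q hq using hP.2
  obtain ⟨v0, hv0⟩ := hne
  have hv0f : P.vIncF v0 f := by simpa using (Finset.mem_filter.mp hv0).2
  have hEne : Nonempty P.E := ⟨((P.vIncF_iff v0 f).mp hv0f).choose⟩
  have hqf : ∀ v, P.vIncF v f → q v ≠ f := by
    intro v _ hc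
    exact hf (hc ▸ (hq v).1.2)
  have hex : ∀ v, P.vIncF v f → ∃ e, P.vIncE v e ∧ P.eIncF e f ∧ P.eIncF e (q v) :=
    fun v hv => shared_edge P hv (hq v).1.1
  set φ : P.V → P.E := fun v =>
    if h : P.vIncF v f then (hex v h).choose else Classical.arbitrary _ with hφdef
  have hφ : ∀ v, P.vIncF v f →
      P.vIncE v (φ v) ∧ P.eIncF (φ v) f ∧ P.eIncF (φ v) (q v) := by
    intro v hv
    simp only [hφdef, dif_pos hv]
    exact (hex v hv).choose_spec
  rw [Finset.card_eq_sum_card_image φ]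
  have hfib : ∀ e ∈ (Finset.univ.filter (fun v => P.vIncF v f)).image φ,
      ((Finset.univ.filter (fun v => P.vIncF v f)).filter (fun v => φ v = e)).card = 2 := by
    intro e he
    obtain ⟨v1, hv1mem, hv1e⟩ := Finset.mem_image.mp he
    have hv1f : P.vIncF v1 f := by simpa using (Finset.mem_filter.mp hv1mem).2
    have hsp := hφ v1 hv1f
    rw [hv1e] at hsp
    have hQne : f ≠ q v1 := fun hc => hqf v1 hv1f hc.symm
    have hset : (Finset.univ.filter (fun v => P.vIncF v f)).filter (fun v => φ v = e)
        = Finset.univ.filter (fun v => P.vIncE v e) := by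
      ext w
      simp only [Finset.mem_filter, Finset.mem_univ, true_and]
      constructor
      · rintro ⟨hwf, hwe⟩
        exact hwe ▸ (hφ w hwf).1
      · intro hwe
        have hwf : P.vIncF w f := (P.vIncF_iff w f).mpr ⟨e, hwe, hsp.2.1⟩
        have hwQ : P.vIncF w (q v1) := (P.vIncF_iff w (q v1)).mpr ⟨e, hwe, hsp.2.2⟩
        have hqw : q v1 = q w := (hq w).2 (q v1) ⟨hwQ, (hq v1).1.2⟩
        have hsw := hφ w hwf
        refine ⟨hwf, P.faces_meet_one_edge f (q v1) hQne (φ w) e hsw.2.1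
          (hqw ▸ hsw.2.2) hsp.2.1 hsp.2.2⟩
    rw [hset]
    have := P.edge_vertices e; rwa [ncard_univ_filter] at this
  rw [Finset.sum_congr rfl hfib, Finset.sum_const, smul_eq_mul]
  exact ⟨_, by ring⟩

private lemma deg_eq (P : SimplePolytope3) (f : P.F) :
    P.faceDeg f = (Finset.univ.filter (fun e => P.eIncF e f)).card := by
  classical
  rw [SimplePolytope3.faceDeg, ncard_univ_filter]

private lemma main_bound (P : SimplePolytope3) (hP : P.IdealAPog) :
    14 ≤ Nat.card P.F ∧ Even (Nat.card P.F) := by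
  classical
  choose q hq using hP.2
  -- counts
  set n := Fintype.card P.V with hn
  set E1 := Fintype.card P.E with hE1
  set m := Fintype.card P.F with hm
  -- 3n = 2E1
  have h3n : 3 * n = 2 * E1 := by
    have hd := double_count (Finset.univ : Finset P.V) (fun v e => P.vIncE v e)
    have hl : ∑ v : P.V, (Finset.univ.filter (fun e => P.vIncE v e)).card = 3 * n := by
      have hc : ∀ v ∈ (Finset.univ : Finset P.V),
          (Finset.univ.filter (fun e => P.vIncE v e)).card = 3 := by
        intro v _; have := P.vertex_edges v; rwa [ncard_univ_filter] at this
      rw [Finset.sum_congr rfl hc, Finset.sum_const, smul_eq_mul, Finset.card_univ, mul_comm]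
    have hr : ∑ e : P.E, ((Finset.univ : Finset P.V).filter (fun v => P.vIncE v e)).card
        = 2 * E1 := by
      have hc : ∀ e ∈ (Finset.univ : Finset P.E),
          ((Finset.univ : Finset P.V).filter (fun v => P.vIncE v e)).card = 2 := by
        intro e _; have := P.edge_vertices e; rwa [ncard_univ_filter] at this
      rw [Finset.sum_congr rfl hc, Finset.sum_const, smul_eq_mul, Finset.card_univ, mul_comm]
    rw [hl, hr] at hd
    exact hd
  -- sum of degrees = 2E1
  have hdegsum : ∑ f : P.F, (Finset.univ.filter (fun e => P.eIncF e f)).card = 2 * E1 := by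
    have hd := double_count (Finset.univ : Finset P.E) (fun e f => P.eIncF e f)
    have hl : ∑ e : P.E, (Finset.univ.filter (fun f => P.eIncF e f)).card = 2 * E1 := by
      have hc : ∀ e ∈ (Finset.univ : Finset P.E),
          (Finset.univ.filter (fun f => P.eIncF e f)).card = 2 := by
        intro e _; have := P.edge_faces e; rwa [ncard_univ_filter] at this
      rw [Finset.sum_congr rfl hc, Finset.sum_const, smul_eq_mul, Finset.card_univ, mul_comm]
    rw [hl] at hd
    exact hd.symm
  -- quads
  set Q := Finset.univ.filter (fun f => P.IsQuad f) with hQ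
  set p4 := Q.card with hp4
  have hquad_deg : ∀ f ∈ Q, (Finset.univ.filter (fun e => P.eIncF e f)).card = 4 := by
    intro f hf
    have : P.IsQuad f := by simpa [hQ] using (Finset.mem_filter.mp hf).2
    rw [← deg_eq]
    exact this
  have hquad_cardV : ∀ f ∈ Q, (Finset.univ.filter (fun v => P.vIncF v f)).card = 4 := by
    intro f hf
    rw [cardV_eq_deg]
    exact hquad_deg f hf
  -- n = 4 * p4
  have hn4 : n = 4 * p4 := by
    have hd := double_count Q (fun f v => P.vIncF v f)
    have hl : ∑ f ∈ Q, (Finset.univ.filter (fun v => P.vIncF v f)).card = 4 * p4 := by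
      rw [Finset.sum_congr rfl hquad_cardV, Finset.sum_const, smul_eq_mul, mul_comm]
    have hr : ∀ v : P.V, (Q.filter (fun f => P.vIncF v f)).card = 1 := by
      intro v
      rw [Finset.card_eq_one]
      refine ⟨q v, ?_⟩
      ext g
      simp only [Finset.mem_filter, Finset.mem_singleton, hQ, Finset.mem_univ, true_and]
      constructor
      · rintro ⟨hgq, hgv⟩
        exact (hq v).2 g ⟨hgv, hgq⟩
      · rintro rfl
        exact ⟨(hq v).1.2, (hq v).1.1⟩
    rw [hl] at hd
    have : ∑ v : P.V, (Q.filter (fun f => P.vIncF v f)).card = n := by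
      rw [Finset.sum_congr rfl (fun v _ => hr v), Finset.sum_const, smul_eq_mul,
        Finset.card_univ, mul_one]
    rw [this] at hd
    omega
  -- nonquad faces have degree ≥ 6
  have hnonquad : ∀ f ∈ Finset.univ.filter (fun f => ¬ P.IsQuad f),
      6 ≤ (Finset.univ.filter (fun e => P.eIncF e f)).card := by
    intro f hf
    have hnq : ¬ P.IsQuad f := by simpa using (Finset.mem_filter.mp hf).2
    have heven : Even (Finset.univ.filter (fun e => P.eIncF e f)).card := by
      rw [← cardV_eq_deg]
      exact nonquad_even P hP hnq
    have hge3 : 3 ≤ (Finset.univ.filter (fun e => P.eIncF e f)).card := by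
      have := P.face_deg_ge f
      rwa [ncard_univ_filter] at this
    have hne4 : (Finset.univ.filter (fun e => P.eIncF e f)).card ≠ 4 := by
      intro hc
      exact hnq (by rw [SimplePolytope3.IsQuad, deg_eq]; exact hc)
    obtain ⟨c, hc⟩ := heven
    omega
  -- split degree sum
  have hsplit := Finset.sum_filter_add_sum_filter_not (Finset.univ : Finset P.F)
    (fun f => P.IsQuad f) (fun f => (Finset.univ.filter (fun e => P.eIncF e f)).card)
  have hqsum : ∑ f ∈ Q, (Finset.univ.filter (fun e => P.eIncF e f)).card = 4 * p4 := by
    rw [Finset.sum_congr rfl hquad_deg, Finset.sum_const, smul_eq_mul, mul_comm]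
  have hcards : p4 + (Finset.univ.filter (fun f => ¬ P.IsQuad f)).card = m := by
    rw [hp4, hQ]
    rw [Finset.card_filter_add_card_filter_not, Finset.card_univ]
  have hnqsum : 6 * (Finset.univ.filter (fun f => ¬ P.IsQuad f)).card
      ≤ ∑ f ∈ Finset.univ.filter (fun f => ¬ P.IsQuad f),
        (Finset.univ.filter (fun e => P.eIncF e f)).card := by
    calc 6 * (Finset.univ.filter (fun f => ¬ P.IsQuad f)).card
        = ∑ _f ∈ Finset.univ.filter (fun f => ¬ P.IsQuad f), 6 := by
          rw [Finset.sum_const, smul_eq_mul, mul_comm]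
      _ ≤ _ := Finset.sum_le_sum hnonquad
  -- Euler
  have heuler := P.euler
  rw [Nat.card_eq_fintype_card, Nat.card_eq_fintype_card, Nat.card_eq_fintype_card] at heuler
  rw [← hn, ← hE1, ← hm] at heuler
  have hdegsum' : 4 * p4 + ∑ f ∈ Finset.univ.filter (fun f => ¬ P.IsQuad f),
      (Finset.univ.filter (fun e => P.eIncF e f)).card = 2 * E1 := by
    rw [← hdegsum, ← hsplit, hqsum]
  rw [Nat.card_eq_fintype_card, ← hm]
  constructor
  · omega
  · have hmeq : m = 2 * p4 + 2 := by omega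
    exact ⟨p4 + 1, by omega⟩


end SimplePolytope3Aux2

/-- Every ideal almost Pogorelov polytope has an even number
`m ≥ 14` of faces, and the minimum `m = 14` is attained (by the
3-dimensional permutohedron). -/
theorem ideal_almost_pogorelov_face_bound :
    (∀ P : SimplePolytope3, P.IdealAPog →
      14 ≤ Nat.card P.F ∧ Even (Nat.card P.F)) ∧
    (∃ P : SimplePolytope3, P.IdealAPog ∧ Nat.card P.F = 14) := by
  constructor
  · exact fun P hP => SimplePolytope3Aux2.main_bound P hP
  · refine ⟨SimplePolytope3Aux.Perm, SimplePolytope3Aux.permIdeal, ?_⟩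
    rw [Nat.card_eq_fintype_card]
    decide
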